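/- Let η be a quasi-Kähler torsion-type tensor on (V,J) satisfying the almost Kähler condition, and let S be an ∇̄η-type tensor on (V,J). If S(x,y)z − S(y,x)z + η_{T_x y} z = 0 for all x,y,z ∈ V, then η = 0. (Via the identity relating the Riemannian and Hermitian curvatures, the displayed hypothesis is the pointwise algebraic form of Gray's first condition (G1) with S = ∇̄η; hence this is the algebraic core of Proposition 2.1: every almost Kähler manifold satisfying (G1) is Kähler.) -/
import Mathlib


open scoped InnerProductSpace

/-- Algebraic core of Proposition 2.1. If η is a quasi-Kähler torsion-type
tensor satisfying the almost Kähler condition and S is an ∇̄η-type tensor with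
`S x y z - S y x z + η (T x y) z = 0` for all `x y z` (the pointwise form of Gray's
condition (G1)), then `η = 0`. -/
theorem eta_vanishes_of_gray_one
    {V : Type*} [NormedAddCommGroup V] [InnerProductSpace ℝ V] [FiniteDimensional ℝ V]
    (J : V →ₗ[ℝ] V)
    (hJiso : ∀ x y : V, ⟪J x, J y⟫_ℝ = ⟪x, y⟫_ℝ)
    (hJJ : ∀ x : V, J (J x) = -x)
    (η : V →ₗ[ℝ] V →ₗ[ℝ] V)
    (hskew : ∀ x y z : V, ⟪η x y, z⟫_ℝ = -⟪y, η x z⟫_ℝ)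
    (hanti : ∀ x y : V, η x (J y) = -J (η x y))
    (hQK : ∀ x y : V, η (J x) (J y) = -η x y)
    (T : V → V → V) (hT : ∀ x y : V, T x y = η x y - η y x)
    (hAK : ∀ x y z : V, ⟪T x y, z⟫_ℝ = -⟪η z x, y⟫_ℝ)
    (S : V →ₗ[ℝ] V →ₗ[ℝ] V →ₗ[ℝ] V)
    (hSskew : ∀ x y z u : V, ⟪S x y z, u⟫_ℝ = -⟪z, S x y u⟫_ℝ)
    (hSanti : ∀ x y z : V, S x y (J z) = -J (S x y z))
    (hSQK : ∀ x y z : V, S x (J y) (J z) = -S x y z)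
    (hG1 : ∀ x y z : V, S x y z - S y x z + η (T x y) z = 0) :
    ∀ x y : V, η x y = 0 := by
  -- η anticommutes with J in the first slot
  have ηJ1 : ∀ x y : V, η (J x) y = -J (η x y) := by
    intro x y
    have e : -J (η (J x) y) = -η x y := (hanti (J x) y).symm.trans (hQK x y)
    have e2 : J (η (J x) y) = η x y := neg_injective e
    have e3 : J (J (η (J x) y)) = J (η x y) := congrArg J e2
    rw [hJJ] at e3
    exact neg_eq_iff_eq_neg.mp e3
  -- S anticommutes with J in the second slot
  have SJ2 : ∀ x y z : V, S x (J y) z = -J (S x y z) := by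
    intro x y z
    have e : -J (S x (J y) z) = -S x y z := (hSanti x (J y) z).symm.trans (hSQK x y z)
    have e2 : J (S x (J y) z) = S x y z := neg_injective e
    have e3 : J (J (S x (J y) z)) = J (S x y z) := congrArg J e2
    rw [hJJ] at e3
    exact neg_eq_iff_eq_neg.mp e3
  have hTsymm : ∀ x y : V, T y x = -(T x y) := by
    intro x y; rw [hT, hT]; abel
  have hTJ1 : ∀ x y : V, T (J x) y = -J (T x y) := by
    intro x y
    rw [hT, hT, ηJ1, hanti, map_sub]
    abel
  have hTJJ : ∀ x y : V, T (J x) (J y) = -(T x y) := by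
    intro x y
    rw [hT, hT, hQK x y, hQK y x]
    abel
  -- the key algebraic step: η (T x y) z = 0
  have key : ∀ x y z : V, η (T x y) z = 0 := by
    intro x y z
    have h0 := hG1 x y z
    have h1 := hG1 (J x) y z
    have h1' := hG1 (J y) x z
    have h2 := hG1 (J x) (J y) z
    rw [SJ2] at h1 h1'
    have hη1 : η (T (J x) y) z = J (η (T x y) z) := by
      rw [hTJ1, map_neg, LinearMap.neg_apply, ηJ1, neg_neg]
    have hη1' : η (T (J y) x) z = -J (η (T x y) z) := by
      rw [hTJ1, map_neg, LinearMap.neg_apply, ηJ1, neg_neg, hTsymm, map_neg,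
        LinearMap.neg_apply, map_neg]
    rw [hη1] at h1
    rw [hη1'] at h1'
    -- isolate S (J x) y z and S (J y) x z
    have hS1 : S (J x) y z = -J (S y x z) - J (η (T x y) z) := by
      linear_combination (norm := module) h1
    have hS1' : S (J y) x z = -J (S x y z) + J (η (T x y) z) := by
      linear_combination (norm := module) h1'
    have e2a : S (J x) (J y) z = -S y x z - η (T x y) z := by
      rw [SJ2, hS1]
      simp only [map_sub, map_neg, hJJ]
      abel
    have e2b : S (J y) (J x) z = -S x y z + η (T x y) z := by
      rw [SJ2, hS1']
      simp only [map_add, map_neg, hJJ]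
      abel
    have hη2 : η (T (J x) (J y)) z = -η (T x y) z := by
      rw [hTJJ, map_neg, LinearMap.neg_apply]
    rw [e2a, e2b, hη2] at h2
    have h4 : (4 : ℝ) • η (T x y) z = 0 := by
      linear_combination (norm := module) h0 - h2
    rcases smul_eq_zero.mp h4 with h | h
    · norm_num at h
    · exact h
  -- hence T = 0
  have hT0 : ∀ x y : V, T x y = 0 := by
    intro x y
    have h := hAK x y (T x y)
    rw [key x y x] at h
    simp only [inner_zero_left, neg_zero] at h
    exact inner_self_eq_zero.mp h
  -- hence η = 0
  intro x y
  have h : ∀ z : V, ⟪η x y, z⟫_ℝ = 0 := by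
    intro z
    have h := hAK y z x
    rw [hT0] at h
    simp only [inner_zero_left] at h
    linarith
  exact inner_self_eq_zero.mp (h (η x y))
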